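/- If all agents have binary additive valuations, then every EFX allocation is an MMAX allocation: for every agent i and every good e ∈ A_{-i}, v_i(A_i) ≥ MMS_i(A_{-i} \ {e}, n−1). -/

import Mathlib

/-- The maximin share of a (ℕ-valued) valuation `v` over the set `S` among `k` parts. -/
noncomputable def MMSnat {ι : Type*} [DecidableEq ι] (v : Finset ι → ℕ)
    (S : Finset ι) (k : ℕ) : ℕ :=
  sSup {t | ∃ π : Fin k → Finset ι,
    (∀ a b : Fin k, a ≠ b → Disjoint (π a) (π b)) ∧
    Finset.univ.biUnion π = S ∧
    t = ⨅ a : Fin k, v (π a)}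

/-- for binary additive valuations, every EFX allocation is MMAX. -/
theorem efx_implies_mmax_binary_additive
    {ι : Type*} [DecidableEq ι] (M : Finset ι) (n : ℕ) (hn : 2 ≤ n)
    (v : Fin n → ι → ℕ) (hbin : ∀ i j, v i j ≤ 1)
    (A : Fin n → Finset ι)
    (hdisj : ∀ a b : Fin n, a ≠ b → Disjoint (A a) (A b))
    (hcover : Finset.univ.biUnion A = M)
    (hEFX : ∀ i j : Fin n, ∀ e ∈ A j,
      ∑ g ∈ (A j).erase e, v i g ≤ ∑ g ∈ A i, v i g) :
    ∀ i : Fin n, ∀ e ∈ M \ A i,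
      MMSnat (fun S => ∑ g ∈ S, v i g) ((M \ A i).erase e) (n - 1)
        ≤ ∑ g ∈ A i, v i g := by
  intro i e he
  rw [Finset.mem_sdiff] at he
  obtain ⟨heM, heA⟩ := he
  set V := ∑ g ∈ A i, v i g with hV
  -- find the block containing e
  rw [← hcover] at heM
  rw [Finset.mem_biUnion] at heM
  obtain ⟨j0, -, hej0⟩ := heM
  have hj0i : j0 ≠ i := by rintro rfl; exact heA hej0
  -- the complement of A i is the union of the other blocks
  have hcompl : M \ A i = (Finset.univ.erase i).biUnion A := by
    ext x
    simp only [Finset.mem_sdiff, Finset.mem_biUnion, Finset.mem_erase,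
      Finset.mem_univ, true_and, and_true]
    constructor
    · rintro ⟨hxM, hxA⟩
      rw [← hcover, Finset.mem_biUnion] at hxM
      obtain ⟨j, -, hj⟩ := hxM
      exact ⟨j, fun h => hxA (h ▸ hj), hj⟩
    · rintro ⟨j, hji, hj⟩
      refine ⟨?_, fun hx => Finset.notMem_empty x ((hdisj j i hji).le_bot (Finset.mem_inter.2 ⟨hj, hx⟩))⟩
      rw [← hcover, Finset.mem_biUnion]; exact ⟨j, Finset.mem_univ _, hj⟩
  -- value of the complement
  have hsum_compl : ∑ g ∈ M \ A i, v i g = ∑ j ∈ Finset.univ.erase i, ∑ g ∈ A j, v i g := by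
    rw [hcompl, Finset.sum_biUnion]
    intro a ha b hb hab
    exact hdisj a b hab
  -- each other block has value ≤ V + 1
  have hblock : ∀ j : Fin n, j ≠ i → ∑ g ∈ A j, v i g ≤ V + 1 := by
    intro j hj
    rcases Finset.eq_empty_or_nonempty (A j) with h | ⟨x, hx⟩
    · simp [h]
    · calc ∑ g ∈ A j, v i g = v i x + ∑ g ∈ (A j).erase x, v i g :=
            (Finset.add_sum_erase _ _ hx).symm
        _ ≤ 1 + V := add_le_add (hbin i x) (hEFX i j x hx)
        _ = V + 1 := by ring
  -- the block containing e, after removing e, has value ≤ V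
  have hj0 : ∑ g ∈ A j0, v i g ≤ V + v i e := by
    calc ∑ g ∈ A j0, v i g = v i e + ∑ g ∈ (A j0).erase e, v i g :=
          (Finset.add_sum_erase _ _ hej0).symm
      _ ≤ v i e + V := by exact Nat.add_le_add_left (hEFX i j0 e hej0) _
      _ = V + v i e := by ring
  -- total value bound
  have hcard : ((Finset.univ.erase i).erase j0).card = n - 2 := by
    rw [Finset.card_erase_of_mem (Finset.mem_erase.2 ⟨hj0i, Finset.mem_univ _⟩),
      Finset.card_erase_of_mem (Finset.mem_univ _), Finset.card_univ, Fintype.card_fin]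
    omega
  have htotal : ∑ g ∈ M \ A i, v i g ≤ (V + v i e) + (n - 2) * (V + 1) := by
    rw [hsum_compl, ← Finset.add_sum_erase _ _ (Finset.mem_erase.2 ⟨hj0i, Finset.mem_univ _⟩)]
    refine add_le_add hj0 ?_
    calc ∑ j ∈ (Finset.univ.erase i).erase j0, ∑ g ∈ A j, v i g
        ≤ ∑ j ∈ (Finset.univ.erase i).erase j0, (V + 1) := by
          refine Finset.sum_le_sum fun j hj => hblock j ?_
          exact (Finset.mem_erase.1 (Finset.mem_erase.1 hj).2).1
      _ = (n - 2) * (V + 1) := by rw [Finset.sum_const, hcard, smul_eq_mul]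
  have hS : ∑ g ∈ (M \ A i).erase e, v i g ≤ V + (n - 2) * (V + 1) := by
    have h1 : v i e + ∑ g ∈ (M \ A i).erase e, v i g = ∑ g ∈ M \ A i, v i g :=
      Finset.add_sum_erase _ _ (Finset.mem_sdiff.2 ⟨by
        rw [← hcover, Finset.mem_biUnion]; exact ⟨j0, Finset.mem_univ _, hej0⟩, heA⟩)
    omega
  -- now bound the sSup
  refine csSup_le' ?_
  rintro t ⟨π, hπd, hπcov, rfl⟩
  haveI : Nonempty (Fin (n - 1)) := ⟨⟨0, by omega⟩⟩
  set t := ⨅ a : Fin (n - 1), ∑ g ∈ π a, v i g with ht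
  have hle : ∀ a : Fin (n - 1), t ≤ ∑ g ∈ π a, v i g := fun a =>
    ciInf_le (OrderBot.bddBelow _) a
  have hmul : (n - 1) * t ≤ ∑ g ∈ (M \ A i).erase e, v i g := by
    calc (n - 1) * t = ∑ _a : Fin (n - 1), t := by
          rw [Finset.sum_const, Finset.card_univ, Fintype.card_fin, smul_eq_mul]
      _ ≤ ∑ a : Fin (n - 1), ∑ g ∈ π a, v i g := Finset.sum_le_sum fun a _ => hle a
      _ = ∑ g ∈ (M \ A i).erase e, v i g := by
          rw [← hπcov, Finset.sum_biUnion]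
          intro a ha b hb hab
          exact hπd a b hab
  by_contra hcon
  push_neg at hcon
  have h1 : (n - 1) * (V + 1) ≤ (n - 1) * t := Nat.mul_le_mul_left _ hcon
  have h2 : (n - 1) * (V + 1) = (n - 2) * (V + 1) + (V + 1) := by
    have : n - 1 = (n - 2) + 1 := by omega
    rw [this, add_mul, one_mul]
  omega
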